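/- For every integer n ≥ 3, the triple (G; ρ_0, ρ_1, ρ_2), where G = F_2^{n-1} ⋊_φ D_{2n} and ρ_0 = (0,h_0), ρ_1 = (0,h_1), ρ_2 = ((0,...,0,1)^T, h_0), is a string C-group of rank 3 and type [n,n]: each ρ_i is an involution, (ρ_0ρ_2)² = 1, ρ_0ρ_1 and ρ_1ρ_2 have order n, G = ⟨ρ_0,ρ_1,ρ_2⟩, and ⟨ρ_0,ρ_1⟩ ∩ ⟨ρ_1,ρ_2⟩ = ⟨ρ_1⟩. -/

import Mathlib

open Matrix DihedralGroup

/-- The matrix `U` of Lemma 3: (0-indexed) row `i` has a 1 at column `n-3-i` for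
`i ≤ n-3`, and the last row is all ones. -/
def Umat (n : ℕ) : Matrix (Fin (n-1)) (Fin (n-1)) (ZMod 2) :=
  Matrix.of fun i j =>
    if (i : ℕ) = n - 2 then 1 else if (i : ℕ) + (j : ℕ) = n - 3 then 1 else 0

/-- The anti-diagonal permutation matrix `V` of Lemma 3. -/
def Vmat (n : ℕ) : Matrix (Fin (n-1)) (Fin (n-1)) (ZMod 2) :=
  Matrix.of fun i j => if (i : ℕ) + (j : ℕ) = n - 2 then 1 else 0

/-- u = (0,…,0,1)ᵀ ∈ F₂^{n-1}. -/
def uVec (n : ℕ) : Fin (n-1) → ZMod 2 := fun i => if (i : ℕ) = n - 2 then 1 else 0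

/-- v = Vu = (1,0,…,0)ᵀ ∈ F₂^{n-1}. -/
def vVec (n : ℕ) : Fin (n-1) → ZMod 2 := fun i => if (i : ℕ) = 0 then 1 else 0

/-- The action of `D_{2n}` on `F₂^{n-1}` (written multiplicatively) induced by a
representation `φ : D_{2n} → Aut(F₂^{n-1})`. -/
def dihAct (n : ℕ) (φ : DihedralGroup n →* Multiplicative (AddAut (Fin (n-1) → ZMod 2))) :
    DihedralGroup n →* MulAut (Multiplicative (Fin (n-1) → ZMod 2)) where
  toFun x := AddEquiv.toMultiplicative (Multiplicative.toAdd (φ x))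
  map_one' := by ext w; simp
  map_mul' x y := by ext w; simp

/-- The semidirect product `G = F₂^{n-1} ⋊_φ D_{2n}`. -/
abbrev Gsd (n : ℕ) (φ : DihedralGroup n →* Multiplicative (AddAut (Fin (n-1) → ZMod 2))) :=
  Multiplicative (Fin (n-1) → ZMod 2) ⋊[dihAct n φ] DihedralGroup n

/-- `ρ₀ = (0, h₀)`, where `h₀ = sr 0`. -/
def rho0 (n : ℕ) (φ : DihedralGroup n →* Multiplicative (AddAut (Fin (n-1) → ZMod 2))) : Gsd n φ :=
  ⟨Multiplicative.ofAdd 0, sr 0⟩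

/-- `ρ₁ = (0, h₁)`, where `h₁ = sr 1`. -/
def rho1 (n : ℕ) (φ : DihedralGroup n →* Multiplicative (AddAut (Fin (n-1) → ZMod 2))) : Gsd n φ :=
  ⟨Multiplicative.ofAdd 0, sr 1⟩

/-- `ρ₂ = (u, h₀)`, where `u = (0,…,0,1)ᵀ`. -/
def rho2 (n : ℕ) (φ : DihedralGroup n →* Multiplicative (AddAut (Fin (n-1) → ZMod 2))) : Gsd n φ :=
  ⟨Multiplicative.ofAdd (uVec n), sr 0⟩

def emv (n m : ℕ) : Fin (n-1) → ZMod 2 := fun i => if (i : ℕ) = m then 1 else 0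

lemma mulVec_emv {n : ℕ} (M : Matrix (Fin (n-1)) (Fin (n-1)) (ZMod 2)) (m : ℕ) (hm : m < n-1) :
    M.mulVec (emv n m) = fun i => M i ⟨m, hm⟩ := by
  funext i
  rw [mulVec, dotProduct]
  have : ∀ j : Fin (n-1), emv n m j = if j = ⟨m, hm⟩ then 1 else 0 := by
    intro j; simp [emv, Fin.ext_iff]
  simp only [this, mul_ite, mul_one, mul_zero, Finset.sum_ite_eq', Finset.mem_univ, if_true]

lemma Vact {n : ℕ} (hn : 3 ≤ n) (m : ℕ) (hm : m ≤ n-2) :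
    (Vmat n).mulVec (emv n m) = emv n (n-2-m) := by
  rw [mulVec_emv _ m (by omega)]
  funext i
  have hi := i.isLt
  simp only [Vmat, Matrix.of_apply, emv]
  have : ((i:ℕ) + m = n - 2) ↔ ((i:ℕ) = n - 2 - m) := by omega
  simp [this]

lemma Uact1 {n : ℕ} (hn : 3 ≤ n) (m : ℕ) (hm : m ≤ n-3) :
    (Umat n).mulVec (emv n m) = emv n (n-3-m) + emv n (n-2) := by
  rw [mulVec_emv _ m (by omega)]
  funext i
  have hi := i.isLt
  simp only [Umat, Matrix.of_apply, emv, Pi.add_apply]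
  split_ifs <;> first | rfl | omega

lemma Uact2 {n : ℕ} (hn : 3 ≤ n) :
    (Umat n).mulVec (emv n (n-2)) = emv n (n-2) := by
  rw [mulVec_emv _ _ (show n-2 < n-1 by omega)]
  funext i
  have hi := i.isLt
  simp only [Umat, Matrix.of_apply, emv]
  split_ifs <;> first | rfl | omega

lemma gmul (n : ℕ) (φ : DihedralGroup n →* Multiplicative (AddAut (Fin (n-1) → ZMod 2)))
    (w v : Fin (n-1) → ZMod 2) (x y : DihedralGroup n) :
    (⟨Multiplicative.ofAdd w, x⟩ : Gsd n φ) * ⟨Multiplicative.ofAdd v, y⟩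
      = ⟨Multiplicative.ofAdd (w + Multiplicative.toAdd (φ x) v), x * y⟩ := rfl

lemma phimul (n : ℕ) (φ : DihedralGroup n →* Multiplicative (AddAut (Fin (n-1) → ZMod 2)))
    (a b : DihedralGroup n) (w : Fin (n-1) → ZMod 2) :
    Multiplicative.toAdd (φ (a*b)) w = Multiplicative.toAdd (φ a) (Multiplicative.toAdd (φ b) w) := by
  rw [_root_.map_mul]; rfl

lemma gpair_congr (n : ℕ) (φ : DihedralGroup n →* Multiplicative (AddAut (Fin (n-1) → ZMod 2)))
    {w v : Fin (n-1) → ZMod 2} {x y : DihedralGroup n} (h1 : w = v) (h2 : x = y) :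
    (⟨Multiplicative.ofAdd w, x⟩ : Gsd n φ) = ⟨Multiplicative.ofAdd v, y⟩ := by
  subst h1; subst h2; rfl

lemma dihedral_closure_sub {G : Type*} [Group G] (p h : G) (hh : h * h = 1)
    (hconj : h * p * h = p⁻¹) {g : G} (hg : g ∈ Subgroup.closure {h, h * p}) :
    ∃ k : ℤ, g = p ^ k ∨ g = p ^ k * h := by
  have hinv : h⁻¹ = h := inv_eq_of_mul_eq_one_right hh
  have hcomm : ∀ k : ℤ, h * p ^ k = p ^ (-k) * h := by
    intro k
    have h1 : h * p ^ k * h = p⁻¹ ^ k := by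
      have h2 := conj_zpow (i := k) (a := h) (b := p)
      rw [hinv, hconj] at h2
      exact h2.symm
    calc h * p ^ k = h * p ^ k * h * h := by rw [mul_assoc _ h h, hh, mul_one]
    _ = p⁻¹ ^ k * h := by rw [h1]
    _ = p ^ (-k) * h := by group
  let S : Subgroup G :=
    { carrier := {g | ∃ k : ℤ, g = p ^ k ∨ g = p ^ k * h}
      one_mem' := ⟨0, Or.inl (by simp)⟩
      mul_mem' := by
        rintro a b ⟨k, rfl | rfl⟩ ⟨l, rfl | rfl⟩
        · exact ⟨k + l, Or.inl (by group)⟩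
        · exact ⟨k + l, Or.inr (by group)⟩
        · refine ⟨k - l, Or.inr ?_⟩
          rw [show p ^ k * h * p ^ l = p ^ k * (h * p ^ l) from by group, hcomm l]
          group
        · refine ⟨k - l, Or.inl ?_⟩
          rw [show p ^ k * h * (p ^ l * h) = p ^ k * (h * p ^ l) * h from by group, hcomm l]
          calc p ^ k * (p ^ (-l) * h) * h = p ^ k * p ^ (-l) * (h * h) := by group
          _ = p ^ (k - l) := by rw [hh, mul_one]; group
      inv_mem' := by
        rintro a ⟨k, rfl | rfl⟩
        · exact ⟨-k, Or.inl (by group)⟩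
        · refine ⟨k, Or.inr ?_⟩
          rw [_root_.mul_inv_rev, hinv,
            show h * (p ^ k)⁻¹ = h * p ^ (-k) from by group, hcomm (-k), neg_neg] }
  have hle : Subgroup.closure {h, h * p} ≤ S := by
    rw [Subgroup.closure_le]
    rintro x (rfl | rfl)
    · exact ⟨0, Or.inr (by simp)⟩
    · refine ⟨-1, Or.inr ?_⟩
      have : h * p = h * p * h * h⁻¹ := by group
      rw [this, hconj, hinv]
      group
  exact hle hg

/-- (G; ρ0, ρ1, ρ2) is a string C-group of rank 3 and type [n,n]: each ρi is an involution, (ρ0ρ2)^2 = 1, ρ0ρ1 and ρ1ρ2 have order n, G = ⟨ρ0,ρ1,ρ2⟩, and ⟨ρ0,ρ1⟩ ∩ ⟨ρ1,ρ2⟩ = ⟨ρ1⟩. -/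
theorem stmt_15 (n : ℕ) (hn : 3 ≤ n)
    (φ : DihedralGroup n →* Multiplicative (AddAut (Fin (n-1) → ZMod 2)))
    (hφ0 : ∀ w, Multiplicative.toAdd (φ (sr 0)) w = (Umat n).mulVec w)
    (hφ1 : ∀ w, Multiplicative.toAdd (φ (sr 1)) w = (Vmat n).mulVec w) :
    orderOf (rho0 n φ) = 2 ∧ orderOf (rho1 n φ) = 2 ∧ orderOf (rho2 n φ) = 2 ∧
    (rho0 n φ * rho2 n φ) ^ 2 = 1 ∧
    orderOf (rho0 n φ * rho1 n φ) = n ∧ orderOf (rho1 n φ * rho2 n φ) = n ∧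
    Subgroup.closure {rho0 n φ, rho1 n φ, rho2 n φ} = (⊤ : Subgroup (Gsd n φ)) ∧
    Subgroup.closure {rho0 n φ, rho1 n φ} ⊓ Subgroup.closure {rho1 n φ, rho2 n φ} =
      Subgroup.closure {rho1 n φ} := by
  haveI : NeZero n := ⟨by omega⟩
  have hu : uVec n = emv n (n-2) := rfl
  have hU1 : ∀ m, m ≤ n-3 → Multiplicative.toAdd (φ (sr 0)) (emv n m) = emv n (n-3-m) + emv n (n-2) := by
    intro m hm; rw [hφ0]; exact Uact1 hn m hm
  have hU2 : Multiplicative.toAdd (φ (sr 0)) (emv n (n-2)) = emv n (n-2) := by rw [hφ0]; exact Uact2 hn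
  have hV : ∀ m, m ≤ n-2 → Multiplicative.toAdd (φ (sr 1)) (emv n m) = emv n (n-2-m) := by
    intro m hm; rw [hφ1]; exact Vact hn m hm
  have hrneg : (sr 1 * sr 0 : DihedralGroup n) = r (-1) := by
    rw [sr_mul_sr]; norm_num
  have hM : ∀ m, m ≤ n-3 → Multiplicative.toAdd (φ (r (-1))) (emv n m) = emv n 0 + emv n (m+1) := by
    intro m hm
    rw [← hrneg, phimul, hU1 m hm, map_add, hV _ (by omega),
      hV _ (by omega)]
    have e1 : n-2-(n-3-m) = m+1 := by omega
    have e2 : n-2-(n-2) = 0 := by omega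
    rw [e1, e2, add_comm]
  have hM2 : Multiplicative.toAdd (φ (r (-1))) (emv n (n-2)) = emv n 0 := by
    rw [← hrneg, phimul, hU2, hV _ le_rfl,
      show n-2-(n-2) = 0 from by omega]
  -- involutions
  have hzadd : ∀ w : Fin (n-1) → ZMod 2, w + w = 0 := by
    intro w; funext i; exact CharTwo.add_self_eq_zero (w i)
  have hsq0 : rho0 n φ * rho0 n φ = 1 := by
    show (⟨Multiplicative.ofAdd 0, sr 0⟩ : Gsd n φ) * ⟨Multiplicative.ofAdd 0, sr 0⟩ = 1
    rw [gmul, map_zero, add_zero, sr_mul_sr, sub_self]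
    rfl
  have hsq1 : rho1 n φ * rho1 n φ = 1 := by
    show (⟨Multiplicative.ofAdd 0, sr 1⟩ : Gsd n φ) * ⟨Multiplicative.ofAdd 0, sr 1⟩ = 1
    rw [gmul, map_zero, add_zero, sr_mul_sr, sub_self]
    rfl
  have hsq2 : rho2 n φ * rho2 n φ = 1 := by
    show (⟨Multiplicative.ofAdd (uVec n), sr 0⟩ : Gsd n φ) * ⟨Multiplicative.ofAdd (uVec n), sr 0⟩ = 1
    rw [gmul, hu, hU2, hzadd, sr_mul_sr, sub_self]
    rfl
  have hne0 : rho0 n φ ≠ 1 := by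
    intro h
    have := congrArg SemidirectProduct.right h
    simp [rho0, one_def, -r_zero] at this
  have hne1 : rho1 n φ ≠ 1 := by
    intro h
    have := congrArg SemidirectProduct.right h
    simp [rho1, one_def, -r_zero] at this
  have hne2 : rho2 n φ ≠ 1 := by
    intro h
    have := congrArg SemidirectProduct.right h
    simp [rho2, one_def, -r_zero] at this
  have ho0 : orderOf (rho0 n φ) = 2 := orderOf_eq_prime (by rw [pow_two]; exact hsq0) hne0
  have ho1 : orderOf (rho1 n φ) = 2 := orderOf_eq_prime (by rw [pow_two]; exact hsq1) hne1
  have ho2 : orderOf (rho2 n φ) = 2 := orderOf_eq_prime (by rw [pow_two]; exact hsq2) hne2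
  -- (ρ0 ρ2)^2 = 1
  have h02 : rho0 n φ * rho2 n φ = ⟨Multiplicative.ofAdd (emv n (n-2)), 1⟩ := by
    show (⟨Multiplicative.ofAdd 0, sr 0⟩ : Gsd n φ) * ⟨Multiplicative.ofAdd (uVec n), sr 0⟩ = _
    rw [gmul, hu, hU2, zero_add, sr_mul_sr, sub_self]
    rfl
  have h02sq : (rho0 n φ * rho2 n φ) ^ 2 = 1 := by
    rw [pow_two, h02, gmul, _root_.map_one]
    show (⟨Multiplicative.ofAdd (emv n (n-2) + emv n (n-2)), 1*1⟩ : Gsd n φ) = 1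
    rw [hzadd, mul_one]
    rfl
  -- ρ0ρ1 = inr (r 1)
  have h01 : rho0 n φ * rho1 n φ = SemidirectProduct.inr (r 1) := by
    show (⟨Multiplicative.ofAdd 0, sr 0⟩ : Gsd n φ) * ⟨Multiplicative.ofAdd 0, sr 1⟩ = _
    rw [gmul, map_zero, add_zero, sr_mul_sr, sub_zero]
    rfl
  have ho01 : orderOf (rho0 n φ * rho1 n φ) = n := by
    rw [h01, orderOf_injective (SemidirectProduct.inr (φ := dihAct n φ))
      SemidirectProduct.inr_injective, orderOf_r_one]
  -- p = ρ1ρ2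
  have hp : rho1 n φ * rho2 n φ = ⟨Multiplicative.ofAdd (emv n 0), r (-1)⟩ := by
    show (⟨Multiplicative.ofAdd 0, sr 1⟩ : Gsd n φ) * ⟨Multiplicative.ofAdd (uVec n), sr 0⟩ = _
    rw [gmul, hu, hV _ le_rfl, zero_add, hrneg, show n-2-(n-2) = 0 from by omega]
  have key : ∀ m : ℕ, m ≤ n - 2 → (rho1 n φ * rho2 n φ) ^ (m+1)
      = ⟨Multiplicative.ofAdd (emv n m), r (-((m+1 : ℕ) : ZMod n))⟩ := by
    intro m
    induction m with
    | zero =>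
      intro _
      rw [pow_one, hp]
      exact gpair_congr n φ rfl (by norm_num)
    | succ m ih =>
      intro hm
      rw [pow_succ', ih (by omega), hp, gmul, r_mul_r]
      refine gpair_congr n φ ?_ ?_
      · rw [hM m (by omega)]
        funext i
        simp only [emv, Pi.add_apply]
        split_ifs <;> first | decide | omega
      · congr 1
        push_cast
        ring
  have hpn : (rho1 n φ * rho2 n φ) ^ n = 1 := by
    have hstep : (rho1 n φ * rho2 n φ) ^ n
        = (rho1 n φ * rho2 n φ) * (rho1 n φ * rho2 n φ) ^ (n-2+1) := by
      rw [← pow_succ', show n-2+1+1 = n from by omega]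
    rw [hstep, key (n-2) le_rfl, hp, gmul, hM2, hzadd, r_mul_r]
    have : (-1 : ZMod n) + -((n-2+1 : ℕ) : ZMod n) = 0 := by
      have h2 : ((1 + (n-2+1) : ℕ) : ZMod n) = 0 := by
        rw [show 1 + (n-2+1) = n from by omega, ZMod.natCast_self]
      push_cast at h2 ⊢
      linear_combination -h2
    rw [this]
    rfl
  have hrm1 : orderOf (r (-1) : DihedralGroup n) = n := by
    have : (r (-1) : DihedralGroup n) = (r 1)⁻¹ :=
      eq_inv_of_mul_eq_one_left (by rw [r_mul_r, neg_add_cancel]; exact one_def.symm)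
    rw [this, orderOf_inv, orderOf_r_one]
  have hop : orderOf (rho1 n φ * rho2 n φ) = n := by
    refine Nat.dvd_antisymm (orderOf_dvd_of_pow_eq_one hpn) ?_
    have hd := orderOf_map_dvd (SemidirectProduct.rightHom) (rho1 n φ * rho2 n φ)
    have hr : SemidirectProduct.rightHom (rho1 n φ * rho2 n φ) = r (-1) := by rw [hp]; rfl
    rwa [hr, hrm1] at hd
  -- generation
  set C := Subgroup.closure {rho0 n φ, rho1 n φ, rho2 n φ} with hC
  have hm0 : rho0 n φ ∈ C := Subgroup.subset_closure (by simp)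
  have hm1 : rho1 n φ ∈ C := Subgroup.subset_closure (by simp)
  have hm2 : rho2 n φ ∈ C := Subgroup.subset_closure (by simp)
  have hinrC : ∀ x : DihedralGroup n, SemidirectProduct.inr (φ := dihAct n φ) x ∈ C := by
    have hr : ∀ k : ZMod n, SemidirectProduct.inr (φ := dihAct n φ) (r k) ∈ C := by
      intro k
      have h1 : (r k : DihedralGroup n) = (r 1) ^ (k.val) := by
        rw [r_one_pow]
        exact congrArg r (ZMod.natCast_rightInverse k).symm
      rw [h1, _root_.map_pow, ← h01]
      exact pow_mem (mul_mem hm0 hm1) _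
    intro x
    cases x with
    | r k => exact hr k
    | sr k =>
      have h1 : (sr k : DihedralGroup n) = sr 0 * r k := by rw [sr_mul_r, zero_add]
      rw [h1, _root_.map_mul]
      exact mul_mem (show SemidirectProduct.inr (φ := dihAct n φ) (sr 0) ∈ C from hm0)
        (hr k)
  have hinlC : ∀ m : ℕ, m ≤ n - 2 →
      SemidirectProduct.inl (φ := dihAct n φ) (Multiplicative.ofAdd (emv n m)) ∈ C := by
    intro m hm
    have h1 : (rho1 n φ * rho2 n φ) ^ (m+1)
        * SemidirectProduct.inr (φ := dihAct n φ) (r ((m+1 : ℕ) : ZMod n)) ∈ C :=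
      mul_mem (pow_mem (mul_mem hm1 hm2) _) (hinrC _)
    have h2 : (rho1 n φ * rho2 n φ) ^ (m+1)
        * SemidirectProduct.inr (φ := dihAct n φ) (r ((m+1 : ℕ) : ZMod n))
        = SemidirectProduct.inl (Multiplicative.ofAdd (emv n m)) := by
      rw [key m hm]
      show (⟨Multiplicative.ofAdd (emv n m), r (-((m+1 : ℕ) : ZMod n))⟩ : Gsd n φ)
        * ⟨Multiplicative.ofAdd 0, r ((m+1 : ℕ) : ZMod n)⟩ = _
      rw [gmul, map_zero, add_zero, r_mul_r, neg_add_cancel]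
      rfl
    rwa [h2] at h1
  have hinlC' : ∀ w : Fin (n-1) → ZMod 2,
      SemidirectProduct.inl (φ := dihAct n φ) (Multiplicative.ofAdd w) ∈ C := by
    intro w
    have hw : w = ∑ i : Fin (n-1), Pi.single i (w i) := (Finset.univ_sum_single w).symm
    rw [hw]
    have : ∀ s : Finset (Fin (n-1)), SemidirectProduct.inl (φ := dihAct n φ)
        (Multiplicative.ofAdd (∑ i ∈ s, Pi.single i (w i))) ∈ C := by
      intro s
      induction s using Finset.induction with
      | empty =>
        rw [Finset.sum_empty]
        exact one_mem C
      | insert x s' hx ih =>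
        rw [Finset.sum_insert hx, ofAdd_add, _root_.map_mul]
        refine mul_mem ?_ ih
        have h01' : (w x = 0) ∨ (w x = 1) := by
          have : ∀ a : ZMod 2, a = 0 ∨ a = 1 := by decide
          exact this (w x)
        rcases h01' with h | h
        · rw [h, Pi.single_zero]
          exact one_mem C
        · have hx2 : Pi.single x (w x) = emv n (x : ℕ) := by
            funext j
            rw [h, Pi.single_apply]
            simp [emv, Fin.ext_iff]
          rw [hx2]
          exact hinlC (x : ℕ) (by have := x.isLt; omega)
    exact this Finset.univ
  have htop : C = (⊤ : Subgroup (Gsd n φ)) := by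
    rw [Subgroup.eq_top_iff']
    intro g
    rw [← SemidirectProduct.inl_left_mul_inr_right g]
    exact mul_mem (hinlC' (Multiplicative.toAdd g.left)) (hinrC g.right)
  -- intersection
  have hinv1 : (rho1 n φ)⁻¹ = rho1 n φ := inv_eq_of_mul_eq_one_right hsq1
  have hinv2 : (rho2 n φ)⁻¹ = rho2 n φ := inv_eq_of_mul_eq_one_right hsq2
  have hconj : rho1 n φ * (rho1 n φ * rho2 n φ) * rho1 n φ = (rho1 n φ * rho2 n φ)⁻¹ := by
    rw [show rho1 n φ * (rho1 n φ * rho2 n φ) * rho1 n φ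
        = (rho1 n φ * rho1 n φ) * (rho2 n φ * rho1 n φ) from by group,
      hsq1, one_mul, _root_.mul_inv_rev, hinv1, hinv2]
  have hBle : ∀ g ∈ Subgroup.closure {rho1 n φ, rho2 n φ},
      ∃ k : ℤ, g = (rho1 n φ * rho2 n φ) ^ k ∨
        g = (rho1 n φ * rho2 n φ) ^ k * rho1 n φ := by
    intro g hg
    have hset : ({rho1 n φ, rho2 n φ} : Set (Gsd n φ))
        = {rho1 n φ, rho1 n φ * (rho1 n φ * rho2 n φ)} := by
      rw [← mul_assoc, hsq1, one_mul]
    rw [hset] at hg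
    exact dihedral_closure_sub (rho1 n φ * rho2 n φ) (rho1 n φ) hsq1 hconj hg
  have hA : Subgroup.closure {rho0 n φ, rho1 n φ}
      ≤ (SemidirectProduct.inr (φ := dihAct n φ)).range := by
    rw [Subgroup.closure_le]
    intro x hx
    rcases hx with rfl | rfl
    · exact ⟨sr 0, rfl⟩
    · exact ⟨sr 1, rfl⟩
  have hleftmul : ∀ a : Gsd n φ, (a * rho1 n φ).left = a.left := by
    intro a
    rw [SemidirectProduct.mul_left]
    show a.left * (dihAct n φ) a.right (1 : Multiplicative (Fin (n-1) → ZMod 2)) = a.left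
    rw [_root_.map_one, mul_one]
  have hint : Subgroup.closure {rho0 n φ, rho1 n φ} ⊓ Subgroup.closure {rho1 n φ, rho2 n φ}
      = Subgroup.closure {rho1 n φ} := by
    apply le_antisymm
    · intro g hg
      rw [Subgroup.mem_inf] at hg
      obtain ⟨hgA, hgB⟩ := hg
      obtain ⟨x, hx⟩ := hA hgA
      obtain ⟨k, hk⟩ := hBle g hgB
      have hgleft : g.left = 1 := by rw [← hx]; rfl
      have hnz : (n : ℤ) ≠ 0 := by exact_mod_cast (by omega : n ≠ 0)
      set m : ℕ := (k % (n : ℤ)).toNat with hmdef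
      have hmn : m < n := by
        have h1 : k % (n : ℤ) < n := Int.emod_lt_of_pos k (by exact_mod_cast (by omega : 0 < n))
        have h2 : 0 ≤ k % (n : ℤ) := Int.emod_nonneg k hnz
        omega
      have hpk : (rho1 n φ * rho2 n φ) ^ k = (rho1 n φ * rho2 n φ) ^ m := by
        have h3 : ((m : ℤ)) = k % (n : ℤ) := Int.toNat_of_nonneg (Int.emod_nonneg k hnz)
        have h4 := zpow_mod_orderOf (rho1 n φ * rho2 n φ) k
        rw [hop] at h4
        rw [← zpow_natCast (rho1 n φ * rho2 n φ) m, h3]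
        exact h4.symm
      have hm0' : m = 0 := by
        by_contra hne
        have hkey := key (m-1) (by omega)
        rw [show m - 1 + 1 = m from by omega] at hkey
        have hleft : g.left = Multiplicative.ofAdd (emv n (m-1)) := by
          rcases hk with hk | hk
          · rw [hk, hpk, hkey]
          · rw [hk, hpk, hleftmul, hkey]
        rw [hgleft] at hleft
        have hfun : (0 : Fin (n-1) → ZMod 2) = emv n (m-1) := by
          have := congrArg Multiplicative.toAdd hleft
          simpa using this
        have := congrFun hfun ⟨m-1, by omega⟩
        simp [emv] at this
      rw [hm0'] at hpk
      rw [pow_zero] at hpk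
      rcases hk with hk | hk
      · rw [hk, hpk]
        exact one_mem _
      · rw [hk, hpk, one_mul]
        exact Subgroup.subset_closure rfl
    · rw [Subgroup.closure_le]
      intro x hx
      rcases hx with rfl
      rw [SetLike.mem_coe, Subgroup.mem_inf]
      exact ⟨Subgroup.subset_closure (by simp), Subgroup.subset_closure (by simp)⟩
  exact ⟨ho0, ho1, ho2, h02sq, ho01, hop, htop, hint⟩
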